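/- Let N ≥ 3 and ℓ ∈ ℝ^N with |ℓ| < 1. Then the energy of the traveling wave W_ℓ satisfies E(W_ℓ(0), ∂_t W_ℓ(0)) = E(W,0)/√(1-|ℓ|²), and its momentum satisfies P(W_ℓ(0), ∂_t W_ℓ(0)) = -(ℓ/√(1-|ℓ|²)) E(W,0). -/

import Mathlib

open MeasureTheory
open scoped RealInnerProductSpace

/-- The ground state `W(x) = (1 + |x|²/(N(N-2)))^{1-N/2}` on `ℝ^N`. -/
noncomputable def groundStateW (N : ℕ) (x : EuclideanSpace ℝ (Fin N)) : ℝ :=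
  (1 + ‖x‖ ^ 2 / (N * (N - 2))) ^ ((1 : ℝ) - N / 2)

/-- The traveling wave `W_ℓ`, i.e. the Lorentz transform with velocity `ℓ` of the
stationary solution `W`. -/
noncomputable def travelingW (N : ℕ) (ℓ : EuclideanSpace ℝ (Fin N)) (t : ℝ)
    (x : EuclideanSpace ℝ (Fin N)) : ℝ :=
  groundStateW N
    (((-t / Real.sqrt (1 - ‖ℓ‖ ^ 2)
        + 1 / ‖ℓ‖ ^ 2 * (1 / Real.sqrt (1 - ‖ℓ‖ ^ 2) - 1) * ⟪ℓ, x⟫) • ℓ) + x)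

/-- The conserved energy of the energy-critical wave equation. -/
noncomputable def waveEnergy (N : ℕ) (u₀ u₁ : EuclideanSpace ℝ (Fin N) → ℝ) : ℝ :=
  (1 / 2) * (∫ x, (‖fderiv ℝ u₀ x‖ ^ 2 + u₁ x ^ 2))
    - ((N : ℝ) - 2) / (2 * N) * ∫ x, |u₀ x| ^ (2 * (N : ℝ) / ((N : ℝ) - 2))

/-- The conserved momentum of the energy-critical wave equation. -/
noncomputable def waveMomentum (N : ℕ) (u₀ u₁ : EuclideanSpace ℝ (Fin N) → ℝ) :
    EuclideanSpace ℝ (Fin N) :=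
  ∫ x, u₁ x • gradient u₀ x


open Real Set Filter Topology

noncomputable section TWaux
namespace TW
variable (N : ℕ)
abbrev E := EuclideanSpace ℝ (Fin N)
def a : ℝ := (N : ℝ) * ((N : ℝ) - 2)
def q (x : E N) : ℝ := 1 + ‖x‖ ^ 2 / a N
def h (x : E N) : ℝ := q N x ^ (-(N : ℝ))
def g (x : E N) : ℝ := q N x ^ (-((N : ℝ) / 2))
def I₁ : ℝ := ∫ x : E N, h N x
variable {N}
variable (hN : 3 ≤ N)

section basic
include hN

lemma hNr : (3 : ℝ) ≤ (N : ℝ) := by exact_mod_cast hN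

lemma ha : 0 < a N := by
  have h3 := hNr hN
  exact mul_pos (by linarith) (by linarith)

lemma hq1 (x : E N) : 1 ≤ q N x := by
  have : 0 ≤ ‖x‖ ^ 2 / a N := div_nonneg (by positivity) (ha hN).le
  simp only [q]; linarith

lemma hq0 (x : E N) : 0 < q N x := lt_of_lt_of_le one_pos (hq1 hN x)

lemma cont_q : Continuous (q N) := by unfold q; fun_prop

lemma cont_h : Continuous (h N) := by
  unfold h
  exact (cont_q hN).rpow_const (fun x => Or.inl (hq0 hN x).ne')

lemma h_pos (x : E N) : 0 < h N x := Real.rpow_pos_of_pos (hq0 hN x) _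

lemma g_sq (x : E N) : g N x * g N x = h N x := by
  unfold g h
  rw [← Real.rpow_add (hq0 hN x)]
  congr 1; ring

lemma h_le (x : E N) :
    h N x ≤ (2 * max (a N) 1) ^ (N : ℝ) * (1 + ‖x‖) ^ (-(2 * (N : ℝ))) := by
  set m := max (a N) 1 with hm
  have ha1 : (0:ℝ) < m := lt_max_of_lt_right one_pos
  have hx1 : (0:ℝ) < 1 + ‖x‖ := by positivity
  have key : (1 + ‖x‖) ^ 2 / (2 * m) ≤ q N x := by
    rw [div_le_iff₀ (by positivity)]
    have h1 : (1 + ‖x‖) ^ 2 ≤ 2 * (1 + ‖x‖ ^ 2) := by nlinarith [sq_nonneg (‖x‖ - 1)]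
    have h2 : 2 * (1 + ‖x‖ ^ 2) ≤ q N x * (2 * m) := by
      have hm1 : (1:ℝ) ≤ m := le_max_right _ _
      have hma : a N ≤ m := le_max_left _ _
      have h3 : (‖x‖ ^ 2 / a N) * a N = ‖x‖ ^ 2 := div_mul_cancel₀ _ (ha hN).ne'
      have h4 : 0 ≤ ‖x‖ ^ 2 / a N := div_nonneg (by positivity) (ha hN).le
      have hq : q N x = 1 + ‖x‖ ^ 2 / a N := rfl
      nlinarith [ha hN]
    linarith
  calc h N x = q N x ^ (-(N : ℝ)) := rfl
    _ ≤ ((1 + ‖x‖) ^ 2 / (2 * m)) ^ (-(N : ℝ)) :=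
        Real.rpow_le_rpow_of_nonpos (by positivity) key
          (neg_nonpos.mpr (Nat.cast_nonneg N))
    _ = (2 * m) ^ (N : ℝ) * (1 + ‖x‖) ^ (-(2 * (N : ℝ))) := by
        rw [Real.rpow_neg (by positivity), Real.div_rpow (by positivity) (by positivity),
          ← Real.rpow_natCast (1 + ‖x‖) 2, ← Real.rpow_mul hx1.le,
          Real.rpow_neg hx1.le]
        rw [div_eq_mul_inv, mul_inv, inv_inv]
        ring_nf

lemma integrable_aux (k : ℕ) (hk : k ≤ 2) :
    Integrable (fun x : E N => ‖x‖ ^ k * h N x) := by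
  set m := max (a N) 1 with hm
  have ha1 : (0:ℝ) < m := lt_max_of_lt_right one_pos
  have hr : (Module.finrank ℝ (E N) : ℝ) < 2 * (N:ℝ) - 2 := by
    rw [finrank_euclideanSpace_fin]
    have := hNr hN; linarith
  have hint : Integrable (fun x : E N => (2*m) ^ (N:ℝ) * (1 + ‖x‖) ^ (-(2 * (N:ℝ) - 2))) :=
    (integrable_one_add_norm hr).const_mul _
  refine hint.mono' ?_ ?_
  · exact ((continuous_norm.pow k).mul (cont_h hN)).aestronglyMeasurable
  · filter_upwards with x
    have hx1 : (0:ℝ) < 1 + ‖x‖ := by positivity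
    have h1 : ‖x‖ ^ k ≤ (1 + ‖x‖) ^ 2 := by
      calc ‖x‖ ^ k ≤ (1 + ‖x‖) ^ k :=
            pow_le_pow_left₀ (norm_nonneg x) (by linarith [norm_nonneg x]) k
        _ ≤ (1 + ‖x‖) ^ 2 := pow_le_pow_right₀ (by linarith [norm_nonneg x]) hk
    have h2 := h_le hN x
    have h3 : 0 ≤ h N x := (h_pos hN x).le
    rw [Real.norm_eq_abs, abs_mul, abs_of_nonneg h3,
      abs_of_nonneg (by positivity : (0:ℝ) ≤ ‖x‖ ^ k)]
    calc ‖x‖ ^ k * h N x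
        ≤ (1 + ‖x‖) ^ 2 * ((2 * m) ^ (N : ℝ) * (1 + ‖x‖) ^ (-(2 * (N : ℝ)))) :=
          mul_le_mul h1 h2 h3 (by positivity)
      _ = (2*m) ^ (N:ℝ) * (1 + ‖x‖) ^ (-(2 * (N:ℝ) - 2)) := by
          rw [show -(2 * (N:ℝ) - 2) = 2 + -(2 * (N:ℝ)) by ring, Real.rpow_add hx1,
            ← Real.rpow_natCast (1 + ‖x‖) 2]
          push_cast
          ring

lemma integrable_h : Integrable (h N) := by
  have := integrable_aux hN 0 (by norm_num)
  simpa using this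

lemma integrable_norm_sq_h : Integrable (fun x : E N => ‖x‖ ^ 2 * h N x) :=
  integrable_aux hN 2 le_rfl

lemma cont_inner (u : E N) : Continuous (fun x : E N => ⟪u, x⟫) :=
  continuous_const.inner continuous_id

lemma integrable_inner_inner_h (u v : E N) :
    Integrable (fun x : E N => ⟪u, x⟫ * ⟪v, x⟫ * h N x) := by
  refine ((integrable_norm_sq_h hN).const_mul (‖u‖ * ‖v‖)).mono' ?_ ?_
  · exact (((cont_inner hN u).mul (cont_inner hN v)).mul (cont_h hN)).aestronglyMeasurable
  · filter_upwards with x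
    have h3 : 0 ≤ h N x := (h_pos hN x).le
    rw [Real.norm_eq_abs, abs_mul, abs_mul, abs_of_nonneg h3]
    have h1 : |⟪u, x⟫| ≤ ‖u‖ * ‖x‖ := abs_real_inner_le_norm u x
    have h2 : |⟪v, x⟫| ≤ ‖v‖ * ‖x‖ := abs_real_inner_le_norm v x
    calc |⟪u, x⟫| * |⟪v, x⟫| * h N x ≤ (‖u‖ * ‖x‖) * (‖v‖ * ‖x‖) * h N x :=
          mul_le_mul_of_nonneg_right
            (mul_le_mul h1 h2 (abs_nonneg _) (by positivity)) h3
      _ = ‖u‖ * ‖v‖ * (‖x‖ ^ 2 * h N x) := by ring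

lemma integrable_inner_smul_h (u : E N) :
    Integrable (fun x : E N => (⟪u, x⟫ * h N x) • x) := by
  refine ((integrable_norm_sq_h hN).const_mul ‖u‖).mono' ?_ ?_
  · exact (((cont_inner hN u).mul (cont_h hN)).smul continuous_id).aestronglyMeasurable
  · filter_upwards with x
    have h3 : 0 ≤ h N x := (h_pos hN x).le
    rw [norm_smul, Real.norm_eq_abs, abs_mul, abs_of_nonneg h3]
    have h1 : |⟪u, x⟫| ≤ ‖u‖ * ‖x‖ := abs_real_inner_le_norm u x
    calc |⟪u, x⟫| * h N x * ‖x‖ ≤ (‖u‖ * ‖x‖) * h N x * ‖x‖ :=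
          mul_le_mul_of_nonneg_right (mul_le_mul_of_nonneg_right h1 h3) (norm_nonneg x)
      _ = ‖u‖ * (‖x‖ ^ 2 * h N x) := by ring

end basic
variable (N) in
def f1 (r : ℝ) : ℝ := (1 + r ^ 2 / a N) ^ (-(N : ℝ))

variable (N) in
def phi (r : ℝ) : ℝ := r ^ N * (1 + r ^ 2 / a N) ^ (-((N : ℝ) - 1))

section radial
include hN

lemma hu1 (r : ℝ) : 1 ≤ 1 + r ^ 2 / a N := by
  have : 0 ≤ r ^ 2 / a N := div_nonneg (by positivity) (ha hN).le
  linarith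

lemma hu0 (r : ℝ) : 0 < 1 + r ^ 2 / a N := lt_of_lt_of_le one_pos (hu1 hN r)

lemma cont_f1 : Continuous (f1 N) := by
  unfold f1
  exact (by fun_prop : Continuous fun r : ℝ => 1 + r ^ 2 / a N).rpow_const
    (fun r => Or.inl (hu0 hN r).ne')

lemma f1_nonneg (r : ℝ) : 0 ≤ f1 N r := (Real.rpow_pos_of_pos (hu0 hN r) _).le

lemma J_int (k : ℕ) (hk : k ≤ N + 1) :
    IntegrableOn (fun r : ℝ => r ^ k * f1 N r) (Ioi 0) := by
  have hsplit : Ioc (0:ℝ) 1 ∪ Ioi 1 = Ioi 0 := Ioc_union_Ioi_eq_Ioi zero_le_one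
  rw [← hsplit]
  apply IntegrableOn.union
  · exact ((continuous_pow k).mul (cont_f1 hN)).integrableOn_Ioc
  · have hb : (k : ℝ) - 2 * N < -1 := by
      have h1 := hNr hN
      have h2 : (k : ℝ) ≤ (N : ℝ) + 1 := by exact_mod_cast hk
      linarith
    have hint : IntegrableOn (fun r : ℝ => a N ^ (N:ℝ) * r ^ ((k:ℝ) - 2 * N)) (Ioi 1) :=
      (integrableOn_Ioi_rpow_of_lt hb one_pos).const_mul _
    refine hint.mono' ?_ ?_
    · exact ((continuous_pow k).mul (cont_f1 hN)).aestronglyMeasurable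
    · filter_upwards [ae_restrict_mem measurableSet_Ioi] with r (hr : 1 < r)
      have hr0 : 0 < r := lt_trans one_pos hr
      have hra : 0 < r ^ 2 / a N := div_pos (by positivity) (ha hN)
      have h1 : f1 N r ≤ (r ^ 2 / a N) ^ (-(N:ℝ)) :=
        Real.rpow_le_rpow_of_nonpos hra (by linarith [hu1 hN r])
          (neg_nonpos.mpr (Nat.cast_nonneg N))
      have h2 : (r ^ 2 / a N) ^ (-(N:ℝ)) = a N ^ (N:ℝ) * r ^ (-(2*(N:ℝ))) := by
        rw [Real.rpow_neg hra.le, Real.div_rpow (by positivity) (ha hN).le,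
          ← Real.rpow_natCast r 2, ← Real.rpow_mul hr0.le, Real.rpow_neg hr0.le]
        rw [div_eq_mul_inv, mul_inv, inv_inv, mul_comm]
        norm_num
      rw [Real.norm_eq_abs, abs_mul, abs_of_nonneg (by positivity : (0:ℝ) ≤ r ^ k),
        abs_of_nonneg (f1_nonneg hN r)]
      calc r ^ k * f1 N r ≤ r ^ k * (a N ^ (N:ℝ) * r ^ (-(2*(N:ℝ)))) := by
            rw [← h2]; exact mul_le_mul_of_nonneg_left h1 (by positivity)
        _ = a N ^ (N:ℝ) * r ^ ((k:ℝ) - 2 * N) := by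
            rw [show (k:ℝ) - 2*N = (k:ℝ) + -(2*(N:ℝ)) by ring, Real.rpow_add hr0,
              Real.rpow_natCast r k]
            ring

lemma hasDeriv_phi (r : ℝ) :
    HasDerivAt (phi N)
      ((N:ℝ) * (r ^ (N-1) * f1 N r) - (((N:ℝ) - 2) / a N) * (r ^ (N+1) * f1 N r)) r := by
  have h₁ : HasDerivAt (fun r : ℝ => r ^ N) ((N:ℝ) * r ^ (N-1)) r := hasDerivAt_pow N r
  have h₂ : HasDerivAt (fun r : ℝ => 1 + r ^ 2 / a N) (2 * r / a N) r := by
    have := (hasDerivAt_pow 2 r).div_const (a N) |>.const_add 1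
    simpa using this
  have h₃ : HasDerivAt (fun r : ℝ => (1 + r ^ 2 / a N) ^ (-((N:ℝ) - 1)))
      (-((N:ℝ) - 1) * (1 + r ^ 2 / a N) ^ (-((N:ℝ) - 1) - 1) * (2 * r / a N)) r :=
    ((Real.hasDerivAt_rpow_const (x := 1 + r ^ 2 / a N) (p := -((N:ℝ) - 1)) (Or.inl (hu0 hN r).ne')).comp r h₂ :)
  have h := h₁.mul h₃
  refine h.congr_deriv (Eq.symm ?_)
  have e2' : (1 + r ^ 2 / a N) ^ (-((N:ℝ) - 1) - 1) = f1 N r := by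
    unfold f1; congr 1; ring
  have e1' : (1 + r ^ 2 / a N) ^ (-((N:ℝ) - 1)) = (1 + r ^ 2 / a N) * f1 N r := by
    unfold f1
    rw [show -((N:ℝ) - 1) = 1 + -(N:ℝ) by ring, Real.rpow_add (hu0 hN r), Real.rpow_one]
  rw [e2', e1']
  obtain ⟨k, hk⟩ : ∃ k, N = k + 3 := ⟨N - 3, by omega⟩
  subst hk
  have n1 : k + 3 - 1 = k + 2 := by omega
  rw [n1]
  have haN : a (k+3) ≠ 0 := (ha hN).ne'
  field_simp
  ring

lemma tendsto_phi : Filter.Tendsto (phi N) Filter.atTop (nhds 0) := by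
  have hn2 : (0:ℝ) < (N:ℝ) - 2 := by have := hNr hN; linarith
  have hlim : Filter.Tendsto
      (fun r : ℝ => a N ^ ((N:ℝ)-1) * r ^ (-((N:ℝ) - 2))) Filter.atTop (nhds 0) := by
    have := (tendsto_rpow_neg_atTop hn2).const_mul (a N ^ ((N:ℝ)-1))
    simpa using this
  apply squeeze_zero' ?_ ?_ hlim
  · filter_upwards [Filter.eventually_ge_atTop 1] with r hr
    have h0 := hu0 hN r
    have hr0 : (0:ℝ) < r := lt_of_lt_of_le one_pos hr
    unfold phi
    positivity
  · filter_upwards [Filter.eventually_ge_atTop 1] with r hr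
    have hr0 : (0:ℝ) < r := lt_of_lt_of_le one_pos hr
    have hra : 0 < r ^ 2 / a N := div_pos (by positivity) (ha hN)
    have h1 : (1 + r^2/a N) ^ (-((N:ℝ)-1)) ≤ (r ^ 2 / a N) ^ (-((N:ℝ)-1)) :=
      Real.rpow_le_rpow_of_nonpos hra (by linarith [hu1 hN r]) (by linarith)
    have h2 : (r ^ 2 / a N) ^ (-((N:ℝ)-1)) = a N ^ ((N:ℝ)-1) * r ^ (-(2*((N:ℝ)-1))) := by
      rw [Real.rpow_neg hra.le, Real.div_rpow (by positivity) (ha hN).le,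
        ← Real.rpow_natCast r 2, ← Real.rpow_mul hr0.le, Real.rpow_neg hr0.le]
      rw [div_eq_mul_inv, mul_inv, inv_inv, mul_comm]
      push_cast
      ring_nf
    calc phi N r ≤ r ^ N * (a N ^ ((N:ℝ)-1) * r ^ (-(2*((N:ℝ)-1)))) := by
          unfold phi
          rw [← h2]
          exact mul_le_mul_of_nonneg_left h1 (by positivity)
      _ = a N ^ ((N:ℝ)-1) * r ^ (-((N:ℝ) - 2)) := by
          rw [show -((N:ℝ) - 2) = (N:ℝ) + -(2*((N:ℝ)-1)) by ring, Real.rpow_add hr0,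
            Real.rpow_natCast]
          ring

lemma oneD_identity :
    ∫ r in Ioi (0:ℝ), r ^ (N - 1) * (r ^ 2 * f1 N r)
      = (N:ℝ) ^ 2 * ∫ r in Ioi (0:ℝ), r ^ (N - 1) * f1 N r := by
  have hJ1 := J_int hN (N-1) (by omega)
  have hJ2 := J_int hN (N+1) (by omega)
  have hcongr : ∀ r : ℝ, r ^ (N - 1) * (r ^ 2 * f1 N r) = r ^ (N + 1) * f1 N r := by
    intro r
    rw [← mul_assoc, ← pow_add]
    congr 2
    omega
  simp only [hcongr]
  have hderiv := fun r (_ : r ∈ Ici (0:ℝ)) => hasDeriv_phi hN r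
  have hint : IntegrableOn (fun r : ℝ =>
      (N:ℝ) * (r ^ (N-1) * f1 N r) - (((N:ℝ) - 2) / a N) * (r ^ (N+1) * f1 N r)) (Ioi 0) :=
    (hJ1.const_mul _).sub (hJ2.const_mul _)
  have hFTC := integral_Ioi_of_hasDerivAt_of_tendsto' hderiv hint (tendsto_phi hN)
  have hphi0 : phi N 0 = 0 := by
    unfold phi
    rw [zero_pow (by omega : N ≠ 0), zero_mul]
  rw [hphi0, sub_zero, integral_sub (hJ1.const_mul _) (hJ2.const_mul _),
    integral_const_mul, integral_const_mul] at hFTC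
  have hn2 : ((N:ℝ) - 2) ≠ 0 := by have := hNr hN; linarith
  have hN0 : (N:ℝ) ≠ 0 := by have := hNr hN; linarith
  have hsimp : ((N:ℝ)-2)/a N = 1/(N:ℝ) := by
    show ((N:ℝ)-2)/((N:ℝ) * ((N:ℝ) - 2)) = 1/(N:ℝ)
    field_simp
  rw [hsimp] at hFTC
  have := hFTC
  field_simp at this
  linarith [this]

lemma radial : ∫ x : E N, ‖x‖ ^ 2 * h N x = (N : ℝ) ^ 2 * I₁ N := by
  haveI : Nontrivial (E N) :=
    Module.nontrivial_of_finrank_pos (R := ℝ)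
      (by rw [finrank_euclideanSpace_fin]; omega)
  have hdim : Module.finrank ℝ (E N) = N := finrank_euclideanSpace_fin
  have e1 := MeasureTheory.integral_fun_norm_addHaar (volume : Measure (E N))
    (fun r : ℝ => r ^ 2 * f1 N r)
  have e2 := MeasureTheory.integral_fun_norm_addHaar (volume : Measure (E N))
    (fun r : ℝ => f1 N r)
  rw [hdim] at e1 e2
  simp only [smul_eq_mul, nsmul_eq_mul] at e1 e2
  have e1' : ∫ x : E N, ‖x‖ ^ 2 * h N x
      = (N:ℝ) * ((volume (Metric.ball (0:E N) 1)).toReal *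
        ∫ r in Ioi (0:ℝ), r ^ (N-1) * (r ^ 2 * f1 N r)) := e1
  have e2' : I₁ N
      = (N:ℝ) * ((volume (Metric.ball (0:E N) 1)).toReal *
        ∫ r in Ioi (0:ℝ), r ^ (N-1) * f1 N r) := e2
  rw [e1', e2', oneD_identity hN]
  ring

end radial
section symmetry
include hN

lemma h_iso (Φ : E N ≃ₗᵢ[ℝ] E N) (x : E N) : h N (Φ x) = h N x := by
  unfold h q
  rw [Φ.norm_map]

lemma K_single {e : E N} (he : ‖e‖ = 1) (i : Fin N) :
    ∫ x : E N, ⟪e, x⟫ * ⟪e, x⟫ * h N x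
      = ∫ x : E N, (x i) * (x i) * h N x := by
  have hcard : Module.finrank ℝ (E N) = Fintype.card (Fin N) := by
    rw [finrank_euclideanSpace_fin, Fintype.card_fin]
  have horth : Orthonormal ℝ (({i} : Set (Fin N)).restrict (fun _ => e)) := by
    constructor
    · intro j
      exact he
    · intro j k hjk
      exfalso
      apply hjk
      have hsub : Subsingleton ({i} : Set (Fin N)) :=
        Set.subsingleton_coe _ |>.mpr Set.subsingleton_singleton
      exact Subsingleton.elim j k
  obtain ⟨B, hB⟩ := horth.exists_orthonormalBasis_extension_of_card_eq hcard
  have hBi : B i = e := hB i rfl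
  have key := MeasureTheory.integral_comp (B.repr.symm : EuclideanSpace ℝ (Fin N) ≃ₗᵢ[ℝ] E N)
    (fun x : E N => ⟪e, x⟫ * ⟪e, x⟫ * h N x)
  rw [← key]
  congr 1
  funext y
  have h1 : ⟪e, B.repr.symm y⟫ = y i := by
    rw [← hBi, ← B.repr_apply_apply]
    simp
  rw [h1, h_iso hN]

lemma norm_sq_coords (x : E N) : ‖x‖ ^ 2 = ∑ j : Fin N, (x j) * (x j) := by
  have := EuclideanSpace.norm_eq x
  rw [this, Real.sq_sqrt (by positivity)]
  congr 1
  funext j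
  rw [Real.norm_eq_abs, ← sq, sq_abs, sq]

lemma inner_sq_integral' {e : E N} (he : ‖e‖ = 1) :
    ∫ x : E N, ⟪e, x⟫ * ⟪e, x⟫ * h N x = (N : ℝ) * I₁ N := by
  have hsingle : ∀ j : Fin N, ‖(EuclideanSpace.single j (1:ℝ) : E N)‖ = 1 := by
    intro j
    rw [EuclideanSpace.norm_single]
    norm_num
  obtain ⟨i0⟩ : Nonempty (Fin N) := ⟨⟨0, by omega⟩⟩
  have hint : ∀ j : Fin N, Integrable (fun x : E N => (x j) * (x j) * h N x) := by
    intro j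
    have := integrable_inner_inner_h hN (EuclideanSpace.single j (1:ℝ))
      (EuclideanSpace.single j (1:ℝ))
    apply this.congr
    filter_upwards with x
    simp [EuclideanSpace.inner_single_left]
  have hsum : ∑ j : Fin N, ∫ x : E N, (x j) * (x j) * h N x
      = ∫ x : E N, ‖x‖ ^ 2 * h N x := by
    rw [← integral_finset_sum _ (fun j _ => hint j)]
    congr 1
    funext x
    rw [norm_sq_coords hN, Finset.sum_mul]
  have hall : ∀ j : Fin N, ∫ x : E N, (x j) * (x j) * h N x
      = ∫ x : E N, (x i0) * (x i0) * h N x := by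
    intro j
    rw [← K_single hN (hsingle j) j]
    have h2 := K_single hN (hsingle j) i0
    rw [h2]
  have hNval : ∑ j : Fin N, ∫ x : E N, (x j) * (x j) * h N x
      = (N:ℝ) * ∫ x : E N, (x i0) * (x i0) * h N x := by
    rw [Finset.sum_congr rfl (fun j _ => hall j), Finset.sum_const, Finset.card_univ,
      Fintype.card_fin, nsmul_eq_mul]
  have hrad := radial hN
  have hN0 : (N:ℝ) ≠ 0 := by have := hNr hN; linarith
  have hi0 : ∫ x : E N, (x i0) * (x i0) * h N x = (N:ℝ) * I₁ N := by
    have : (N:ℝ) * ∫ x : E N, (x i0) * (x i0) * h N x = (N:ℝ) * ((N:ℝ) * I₁ N) := by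
      rw [← hNval, hsum, hrad]; ring
    exact mul_left_cancel₀ hN0 this
  rw [K_single hN he i0, hi0]

lemma inner_mul_inner_integral {u v : E N} (huv : ⟪u, v⟫ = 0) :
    ∫ x : E N, ⟪u, x⟫ * ⟪v, x⟫ * h N x = 0 := by
  rcases eq_or_ne v 0 with rfl | hv
  · simp
  · set R := Submodule.reflection ((ℝ ∙ v)ᗮ) with hR
    have hRv : R v = -v := Submodule.reflection_orthogonalComplement_singleton_eq_neg v
    have hRu : R u = u := by
      apply Submodule.reflection_mem_subspace_eq_self
      rw [Submodule.mem_orthogonal_singleton_iff_inner_right]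
      rwa [real_inner_comm]
    have key := MeasureTheory.integral_comp (R : E N ≃ₗᵢ[ℝ] E N)
      (fun x : E N => ⟪u, x⟫ * ⟪v, x⟫ * h N x)
    have hptw : ∀ x : E N, ⟪u, R x⟫ * ⟪v, R x⟫ * h N (R x)
        = -(⟪u, x⟫ * ⟪v, x⟫ * h N x) := by
      intro x
      have h1 : ⟪u, R x⟫ = ⟪u, x⟫ := by
        conv_lhs => rw [← hRu]
        exact R.inner_map_map u x
      have h2 : ⟪v, R x⟫ = -⟪v, x⟫ := by
        have := R.inner_map_map v x
        rw [hRv, inner_neg_left] at this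
        linarith
      rw [h1, h2, h_iso hN]
      ring
    simp only [hptw] at key
    rw [integral_neg] at key
    linarith

lemma inner_smul_integral {e : E N} (he : ‖e‖ = 1) :
    ∫ x : E N, (⟪e, x⟫ * h N x) • x = ((N : ℝ) * I₁ N) • e := by
  apply ext_inner_left ℝ
  intro w
  rw [← integral_inner (integrable_inner_smul_h hN e) w]
  set w' := w - ⟪w, e⟫ • e with hw'
  have hew' : ⟪e, w'⟫ = 0 := by
    rw [hw']
    simp only [inner_sub_right, real_inner_smul_right]
    rw [real_inner_self_eq_norm_sq, he, real_inner_comm e w]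
    ring
  have key : (fun x : E N => ⟪w, (⟪e, x⟫ * h N x) • x⟫)
      = fun x : E N => ⟪w, e⟫ * (⟪e, x⟫ * ⟪e, x⟫ * h N x) + ⟪e, x⟫ * ⟪w', x⟫ * h N x := by
    funext x
    rw [real_inner_smul_right]
    have hwx : ⟪w, x⟫ = ⟪w, e⟫ * ⟪e, x⟫ + ⟪w', x⟫ := by
      rw [hw', inner_sub_left, real_inner_smul_left]
      ring
    rw [hwx]
    ring
  rw [key, integral_add ((integrable_inner_inner_h hN e e).const_mul _)
    (integrable_inner_inner_h hN e w'), integral_const_mul, inner_sq_integral' hN he,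
    inner_mul_inner_integral hN hew', real_inner_smul_right]
  ring

end symmetry
section calculus
include hN

lemma scalar_coeff (x : E N) :
    (1 - (N:ℝ)/2) * q N x ^ ((1 - (N:ℝ)/2) - 1) * (2 / a N) = -(1/(N:ℝ)) * g N x := by
  have hg : q N x ^ ((1 - (N:ℝ)/2) - 1) = g N x := by
    unfold g; congr 1; ring
  rw [hg]
  have hN0 : (N:ℝ) ≠ 0 := by have := hNr hN; linarith
  have hn2 : (N:ℝ) - 2 ≠ 0 := by have := hNr hN; linarith
  have ha' : a N = (N:ℝ) * ((N:ℝ) - 2) := rfl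
  rw [ha']
  field_simp
  ring

lemma hasFDerivW (x : E N) :
    HasFDerivAt (groundStateW N)
      ((-(1/(N:ℝ)) * g N x) • innerSL ℝ x) x := by
  have h1 : HasFDerivAt (fun y : E N => ‖y‖ ^ 2) (2 • innerSL ℝ x) x :=
    (hasStrictFDerivAt_norm_sq x).hasFDerivAt
  have hq : HasFDerivAt (q N) ((2 / a N) • innerSL ℝ x) x := by
    have h2 := (h1.mul_const (a N)⁻¹).const_add 1
    have hqeq : q N = fun y : E N => 1 + ‖y‖ ^ 2 * (a N)⁻¹ := by
      funext y
      unfold q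
      ring
    rw [hqeq]
    refine h2.congr_fderiv (Eq.symm ?_)
    ext z
    simp [div_eq_mul_inv]
    rw [mul_comm 2, mul_assoc]
  have hr := (Real.hasDerivAt_rpow_const (x := q N x) (p := 1 - (N:ℝ)/2)
    (Or.inl (hq0 hN x).ne')).comp_hasFDerivAt x hq
  have hfun : groundStateW N = fun y => q N y ^ (1 - (N:ℝ)/2) := by
    funext y
    show (1 + ‖y‖ ^ 2 / ((N:ℝ) * ((N:ℝ) - 2))) ^ ((1:ℝ) - (N:ℝ)/2) = _
    rfl
  rw [hfun]
  refine hr.congr_fderiv (Eq.symm ?_)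
  rw [← scalar_coeff hN x]
  ext z
  simp only [ContinuousLinearMap.coe_smul', Pi.smul_apply, smul_eq_mul]
  ring

lemma hasGradientW (x : E N) :
    HasGradientAt (groundStateW N) ((-(1/(N:ℝ)) * g N x) • x) x := by
  rw [hasGradientAt_iff_hasFDerivAt]
  refine (hasFDerivW hN x).congr_fderiv (Eq.symm ?_)
  ext z
  rw [InnerProductSpace.toDual_apply_apply, real_inner_smul_left]
  simp only [ContinuousLinearMap.coe_smul', Pi.smul_apply, smul_eq_mul, innerSL_apply_apply]

lemma gradW (x : E N) : gradient (groundStateW N) x = (-(1/(N:ℝ)) * g N x) • x :=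
  (hasGradientW hN x).gradient

lemma fderivW (x : E N) :
    fderiv ℝ (groundStateW N) x
      = InnerProductSpace.toDual ℝ (E N) ((-(1/(N:ℝ)) * g N x) • x) := by
  exact ((hasGradientW hN x).hasFDerivAt).fderiv

lemma norm_fderivW_sq (x : E N) :
    ‖fderiv ℝ (groundStateW N) x‖ ^ 2 = (1/(N:ℝ)^2) * (‖x‖ ^ 2 * h N x) := by
  rw [fderivW hN x, LinearIsometryEquiv.norm_map, norm_smul]
  have hgpos : 0 < g N x := Real.rpow_pos_of_pos (hq0 hN x) _
  rw [Real.norm_eq_abs, abs_mul, abs_neg, abs_of_pos hgpos]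
  rw [mul_pow, mul_pow, ← g_sq hN x]
  have hN0 : (N:ℝ) ≠ 0 := by have := hNr hN; linarith
  rw [abs_of_nonneg (by positivity : (0:ℝ) ≤ 1/(N:ℝ))]
  field_simp

lemma W_pos (x : E N) : 0 < groundStateW N x :=
  Real.rpow_pos_of_pos (hq0 hN x) _

lemma abs_W_rpow (x : E N) :
    |groundStateW N x| ^ (2 * (N : ℝ) / ((N : ℝ) - 2)) = h N x := by
  rw [abs_of_pos (W_pos hN x)]
  have hW : groundStateW N x = q N x ^ ((1:ℝ) - (N:ℝ)/2) := rfl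
  rw [hW, ← Real.rpow_mul (hq0 hN x).le]
  unfold h
  congr 1
  have hn2 : (N:ℝ) - 2 ≠ 0 := by have := hNr hN; linarith
  field_simp
  ring

lemma energy_W : waveEnergy N (groundStateW N) 0 = I₁ N / N := by
  have hN0 : (N:ℝ) ≠ 0 := by have := hNr hN; linarith
  have hn2 : (N:ℝ) - 2 ≠ 0 := by have := hNr hN; linarith
  unfold waveEnergy
  have h1 : (fun x : E N => ‖fderiv ℝ (groundStateW N) x‖ ^ 2 + (0 : E N → ℝ) x ^ 2)
      = fun x : E N => (1/(N:ℝ)^2) * (‖x‖ ^ 2 * h N x) := by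
    funext x
    rw [norm_fderivW_sq hN x]
    simp
  have h2 : (fun x : E N => |groundStateW N x| ^ (2 * (N : ℝ) / ((N : ℝ) - 2)))
      = fun x : E N => h N x := by
    funext x
    exact abs_W_rpow hN x
  rw [h1, h2, integral_const_mul, radial hN]
  show (1:ℝ)/2 * (1/(N:ℝ)^2 * ((N:ℝ)^2 * I₁ N)) - ((N:ℝ) - 2)/(2*(N:ℝ)) * I₁ N = I₁ N / N
  field_simp
  ring

end calculus
section Tsection

variable (N) in
/-- The linear map `T x = x + κ ⟪ℓ, x⟫ • ℓ`. -/
def Tmap (ℓ : E N) (κ : ℝ) : E N →ₗ[ℝ] E N :=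
  LinearMap.id + κ • ((innerSL ℝ ℓ).toLinearMap.smulRight ℓ)

lemma Tmap_apply (ℓ : E N) (κ : ℝ) (x : E N) :
    Tmap N ℓ κ x = x + (κ * ⟪ℓ, x⟫) • ℓ := by
  unfold Tmap
  simp only [LinearMap.add_apply, LinearMap.id_apply, LinearMap.smul_apply,
    LinearMap.smulRight_apply, ContinuousLinearMap.coe_coe, innerSL_apply_apply, smul_smul]

lemma Tmap_selfAdjoint (ℓ : E N) (κ : ℝ) (x y : E N) :
    ⟪Tmap N ℓ κ x, y⟫ = ⟪x, Tmap N ℓ κ y⟫ := by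
  rw [Tmap_apply, Tmap_apply, inner_add_left, inner_add_right, real_inner_smul_left,
    real_inner_smul_right, real_inner_comm ℓ x]
  ring

lemma Tmap_cont (ℓ : E N) (κ : ℝ) : Continuous (Tmap N ℓ κ) :=
  (Tmap N ℓ κ).continuous_of_finiteDimensional

lemma det_Tmap (hN : 3 ≤ N) (ℓ : E N) (κ : ℝ) :
    LinearMap.det (Tmap N ℓ κ) = 1 + κ * ‖ℓ‖ ^ 2 := by
  classical
  set b := (EuclideanSpace.basisFun (Fin N) ℝ).toBasis with hb
  rw [← LinearMap.det_toMatrix b]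
  have hmat : LinearMap.toMatrix b b (Tmap N ℓ κ)
      = 1 + Matrix.replicateCol (Fin 1) (fun i => ℓ i) * Matrix.replicateRow (Fin 1) (fun j => κ * ℓ j) := by
    ext i j
    rw [LinearMap.toMatrix_apply]
    have hbj : b j = EuclideanSpace.single j 1 := by
      rw [hb, OrthonormalBasis.coe_toBasis, EuclideanSpace.basisFun_apply]
    have hrepr : ∀ v : E N, b.repr v i = v i := by
      intro v
      rw [hb, OrthonormalBasis.coe_toBasis_repr_apply, EuclideanSpace.basisFun_repr]
    rw [hbj, hrepr, Tmap_apply]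
    have hinner : ⟪ℓ, (EuclideanSpace.single j (1:ℝ) : E N)⟫ = ℓ j := by
      rw [EuclideanSpace.inner_single_right]
      simp
    rw [hinner]
    simp only [PiLp.add_apply, PiLp.smul_apply, smul_eq_mul, EuclideanSpace.single_apply,
      Matrix.add_apply, Matrix.one_apply, Matrix.mul_apply, Matrix.replicateCol_apply, Matrix.replicateRow_apply,
      Finset.univ_unique, Finset.sum_singleton]
    by_cases hij : i = j
    · subst hij
      simp
      ring
    · have : ¬ (j = i) := fun hc => hij hc.symm
      simp [hij, this]
      ring
  rw [hmat]
  refine (Matrix.det_one_add_replicateCol_mul_replicateRow _ _).trans ?_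
  congr 1
  rw [dotProduct]
  rw [norm_sq_coords hN ℓ, Finset.mul_sum]
  congr 1
  funext j
  ring

lemma integral_comp_linear {V : Type*} [NormedAddCommGroup V] [NormedSpace ℝ V]
    (T : E N →ₗ[ℝ] E N) (hdet : LinearMap.det T ≠ 0) (F : E N → V) (hF : Continuous F) :
    ∫ x : E N, F (T x) = |(LinearMap.det T)⁻¹| • ∫ y : E N, F y := by
  have hmap : Measure.map T (volume : Measure (E N))
      = ENNReal.ofReal |(LinearMap.det T)⁻¹| • volume :=
    Measure.map_linearMap_addHaar_eq_smul_addHaar volume hdet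
  have hTmeas : Measurable T := T.continuous_of_finiteDimensional.measurable
  have hFm : AEStronglyMeasurable F (Measure.map T (volume : Measure (E N))) :=
    hF.aestronglyMeasurable
  rw [← MeasureTheory.integral_map hTmeas.aemeasurable hFm, hmap, integral_smul_measure,
    ENNReal.toReal_ofReal (abs_nonneg _)]

end Tsection

end TW
end TWaux

set_option maxHeartbeats 1000000

/-- Energy and momentum of the traveling wave:
`E(W_ℓ(0), ∂_t W_ℓ(0)) = E(W,0)/√(1-|ℓ|²)` and
`P(W_ℓ(0), ∂_t W_ℓ(0)) = -(ℓ/√(1-|ℓ|²)) E(W,0)`. -/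
theorem travelingW_energy_momentum (N : ℕ) (hN : 3 ≤ N)
    (ℓ : EuclideanSpace ℝ (Fin N)) (hℓ : ‖ℓ‖ < 1) :
    waveEnergy N (travelingW N ℓ 0) (fun x => deriv (fun t => travelingW N ℓ t x) 0)
        = waveEnergy N (groundStateW N) 0 / Real.sqrt (1 - ‖ℓ‖ ^ 2)
      ∧ waveMomentum N (travelingW N ℓ 0)
          (fun x => deriv (fun t => travelingW N ℓ t x) 0)
        = -(waveEnergy N (groundStateW N) 0 / Real.sqrt (1 - ‖ℓ‖ ^ 2)) • ℓ := by
  rcases eq_or_ne ℓ 0 with rfl | hl0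
  · -- stationary case ℓ = 0
    have hu0 : travelingW N 0 0 = groundStateW N := by
      funext x
      unfold travelingW
      rw [smul_zero, zero_add]
    have hu1 : (fun x : TW.E N => deriv (fun t => travelingW N 0 t x) 0)
        = (0 : TW.E N → ℝ) := by
      funext x
      have hconst : (fun t : ℝ => travelingW N 0 t x) = fun _ => groundStateW N x := by
        funext t
        unfold travelingW
        rw [smul_zero, zero_add]
      rw [hconst, deriv_const]
      rfl
    rw [hu0, hu1]
    have hs1 : Real.sqrt (1 - ‖(0 : TW.E N)‖ ^ 2) = 1 := by
      rw [norm_zero]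
      norm_num
    rw [hs1, div_one]
    refine ⟨rfl, ?_⟩
    rw [smul_zero]
    unfold waveMomentum
    simp
  · -- main case ℓ ≠ 0
    have hc0 : 0 < ‖ℓ‖ := norm_pos_iff.mpr hl0
    set c : ℝ := ‖ℓ‖ with hc
    set s : ℝ := Real.sqrt (1 - c ^ 2) with hs
    have h1c : 0 < 1 - c ^ 2 := by nlinarith
    have hs0 : 0 < s := Real.sqrt_pos.mpr h1c
    have hs2 : s ^ 2 = 1 - c ^ 2 := Real.sq_sqrt h1c.le
    have hN0 : (N:ℝ) ≠ 0 := by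
      have : (3:ℝ) ≤ (N:ℝ) := by exact_mod_cast hN
      linarith
    set κ : ℝ := (s⁻¹ - 1) / c ^ 2 with hκ
    set T : TW.E N →ₗ[ℝ] TW.E N := TW.Tmap N ℓ κ with hT
    set e : TW.E N := c⁻¹ • ℓ with he
    have hnorme : ‖e‖ = 1 := by
      rw [he, norm_smul, Real.norm_eq_abs, abs_of_pos (inv_pos.mpr hc0), ← hc,
        inv_mul_cancel₀ hc0.ne']
    have hle : ℓ = c • e := by
      rw [he, smul_smul, mul_inv_cancel₀ hc0.ne', one_smul]
    have hdet : LinearMap.det T = s⁻¹ := by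
      rw [hT, TW.det_Tmap hN, ← hc, hκ]
      field_simp
      ring
    have hdet_ne : LinearMap.det T ≠ 0 := by
      rw [hdet]
      positivity
    have habs : |(LinearMap.det T)⁻¹| = s := by
      rw [hdet, inv_inv, abs_of_pos hs0]
    have hinner_e : ∀ y : TW.E N, ⟪ℓ, y⟫ = c * ⟪e, y⟫ := by
      intro y
      conv_lhs => rw [hle]
      rw [real_inner_smul_left]
    -- u₀ = W ∘ T
    have hu0fun : travelingW N ℓ 0 = fun x => groundStateW N (T x) := by
      funext x
      unfold travelingW
      rw [hT, TW.Tmap_apply, ← hc, ← hs]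
      congr 1
      rw [neg_zero, zero_div, zero_add]
      have hco : 1/c^2*(1/s - 1)*⟪ℓ,x⟫ = κ * ⟪ℓ,x⟫ := by
        rw [hκ]
        ring
      rw [hco, add_comm]
    -- time derivative
    have hu1fun : (fun x : TW.E N => deriv (fun t => travelingW N ℓ t x) 0)
        = fun x : TW.E N => (s⁻¹ / (N:ℝ)) * (TW.g N (T x) * ⟪T x, ℓ⟫) := by
      funext x
      have hψfun : (fun t : ℝ => travelingW N ℓ t x)
          = fun t : ℝ => groundStateW N (T x + (-(t * s⁻¹)) • ℓ) := by
        funext t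
        unfold travelingW
        rw [hT, TW.Tmap_apply, ← hc, ← hs]
        congr 1
        have hco : 1/c^2*(1/s - 1)*⟪ℓ,x⟫ = κ * ⟪ℓ,x⟫ := by
          rw [hκ]
          ring
        rw [hco]
        have hts : -t/s = -(t * s⁻¹) := by
          field_simp
        rw [add_smul, hts, add_comm]
        module
      rw [hψfun]
      have hψd : HasDerivAt (fun t : ℝ => T x + (-(t * s⁻¹)) • ℓ) ((-s⁻¹) • ℓ) 0 := by
        have h1 : HasDerivAt (fun t : ℝ => -(t * s⁻¹)) (-s⁻¹) 0 :=
          (hasDerivAt_mul_const s⁻¹).neg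
        exact (h1.smul_const ℓ).const_add (T x)
      have hψ0 : T x + (-((0:ℝ) * s⁻¹)) • ℓ = T x := by
        rw [zero_mul, neg_zero, zero_smul, add_zero]
      have hgrad : HasFDerivAt (groundStateW N)
          ((InnerProductSpace.toDual ℝ (TW.E N)) ((-(1/(N:ℝ)) * TW.g N (T x)) • (T x)))
          (T x + (-((0:ℝ) * s⁻¹)) • ℓ) := by
        rw [hψ0]
        exact (TW.hasGradientW hN (T x)).hasFDerivAt
      have hcomp := hgrad.comp_hasDerivAt 0 hψd
      have hcomp' : HasDerivAt (fun t : ℝ => groundStateW N (T x + (-(t * s⁻¹)) • ℓ))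
          ((InnerProductSpace.toDual ℝ (TW.E N))
            ((-(1/(N:ℝ)) * TW.g N (T x)) • (T x)) ((-s⁻¹) • ℓ)) 0 := hcomp
      rw [hcomp'.deriv, InnerProductSpace.toDual_apply_apply, real_inner_smul_left,
        real_inner_smul_right]
      ring
    -- gradient of u₀
    have hgradu0 : ∀ x : TW.E N, HasGradientAt (fun x => groundStateW N (T x))
        ((-(1/(N:ℝ)) * TW.g N (T x)) • T (T x)) x := by
      intro x
      have hW := TW.hasGradientW hN (T x)
      rw [hasGradientAt_iff_hasFDerivAt] at hW ⊢
      have hTfd : HasFDerivAt (T : TW.E N → TW.E N) T.toContinuousLinearMap x :=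
        T.toContinuousLinearMap.hasFDerivAt
      have hcomp := hW.comp x hTfd
      refine hcomp.congr_fderiv (Eq.symm ?_)
      ext z
      simp only [InnerProductSpace.toDual_apply_apply, ContinuousLinearMap.coe_comp',
        Function.comp_apply, LinearMap.coe_toContinuousLinearMap']
      rw [real_inner_smul_left, real_inner_smul_left]
      rw [show (T z : TW.E N) = TW.Tmap N ℓ κ z from rfl,
        ← TW.Tmap_selfAdjoint (ℓ := ℓ) (κ := κ) (T x) z]
    have hfderivu0 : ∀ x : TW.E N, ‖fderiv ℝ (fun x => groundStateW N (T x)) x‖ ^ 2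
        = (1/(N:ℝ)^2) * (TW.h N (T x) * ‖T (T x)‖ ^ 2) := by
      intro x
      rw [((hgradu0 x).hasFDerivAt).fderiv, LinearIsometryEquiv.norm_map, norm_smul]
      have hgpos : 0 < TW.g N (T x) := Real.rpow_pos_of_pos (TW.hq0 hN (T x)) _
      rw [Real.norm_eq_abs, abs_mul, abs_neg, abs_of_pos hgpos,
        abs_of_nonneg (by positivity : (0:ℝ) ≤ 1/(N:ℝ))]
      rw [mul_pow, mul_pow,
        show TW.g N (T x) ^ 2 = TW.h N (T x) from by rw [sq]; exact TW.g_sq hN (T x)]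
      ring
    -- ‖T y‖²
    have hTnorm : ∀ y : TW.E N, ‖T y‖ ^ 2
        = ‖y‖ ^ 2 + ((2*κ + κ^2*c^2)*c^2) * (⟪e, y⟫ * ⟪e, y⟫) := by
      intro y
      rw [hT, TW.Tmap_apply, norm_add_sq_real, real_inner_smul_right, norm_smul,
        Real.norm_eq_abs, mul_pow, sq_abs, ← hc]
      have h1 : ⟪ℓ, y⟫ = c * ⟪e, y⟫ := hinner_e y
      have h2 : ⟪y, ℓ⟫ = c * ⟪e, y⟫ := by rw [real_inner_comm]; exact h1
      rw [h1, h2]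
      ring
    have hcoef : (2*κ + κ^2*c^2)*c^2 = s⁻¹ * s⁻¹ - 1 := by
      rw [hκ]
      field_simp
      ring
    have hκc : 1 + κ * c^2 = s⁻¹ := by
      rw [hκ]
      field_simp
      ring
    -- ENERGY computation
    set F₁ : TW.E N → ℝ := fun y => (1/(N:ℝ)^2) * (‖y‖ ^ 2 * TW.h N y)
      + ((s⁻¹*s⁻¹ - 1)/(N:ℝ)^2 + (s⁻¹/(N:ℝ))^2 * c^2) * (⟪e, y⟫ * ⟪e, y⟫ * TW.h N y)
      with hF₁
    have hF₁cont : Continuous F₁ := by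
      rw [hF₁]
      have h1 := TW.cont_h hN
      have h2 := TW.cont_inner hN e
      fun_prop
    have hptw1 : ∀ x : TW.E N,
        ‖fderiv ℝ (fun x => groundStateW N (T x)) x‖ ^ 2
          + ((s⁻¹ / (N:ℝ)) * (TW.g N (T x) * ⟪T x, ℓ⟫)) ^ 2 = F₁ (T x) := by
      intro x
      rw [hfderivu0 x, hF₁]
      have hg2 : TW.g N (T x) * TW.g N (T x) = TW.h N (T x) := TW.g_sq hN (T x)
      have h3 : ⟪T x, ℓ⟫ = c * ⟪e, T x⟫ := by
        rw [real_inner_comm]; exact hinner_e (T x)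
      rw [hTnorm (T x), hcoef]
      simp only [h3, ← hg2]
      ring
    have hF₁int : ∫ y : TW.E N, F₁ y
        = TW.I₁ N + ((s⁻¹*s⁻¹ - 1)/(N:ℝ)^2 + (s⁻¹/(N:ℝ))^2 * c^2) * ((N:ℝ) * TW.I₁ N) := by
      have hint1 : Integrable (fun y : TW.E N => (1/(N:ℝ)^2) * (‖y‖ ^ 2 * TW.h N y)) :=
        (TW.integrable_norm_sq_h hN).const_mul _
      have hint2 : Integrable (fun y : TW.E N =>
          ((s⁻¹*s⁻¹ - 1)/(N:ℝ)^2 + (s⁻¹/(N:ℝ))^2 * c^2) * (⟪e, y⟫ * ⟪e, y⟫ * TW.h N y)) :=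
        (TW.integrable_inner_inner_h hN e e).const_mul _
      rw [hF₁]
      rw [integral_add hint1 hint2, integral_const_mul, integral_const_mul,
        TW.radial hN, TW.inner_sq_integral' hN hnorme]
      congr 1
      field_simp
    have hCoV1 : ∫ x : TW.E N, F₁ (T x) = s * ∫ y : TW.E N, F₁ y := by
      rw [TW.integral_comp_linear T hdet_ne F₁ hF₁cont, habs, smul_eq_mul]
    have hLHS : (∫ x : TW.E N, (‖fderiv ℝ (fun x => groundStateW N (T x)) x‖ ^ 2
          + ((s⁻¹ / (N:ℝ)) * (TW.g N (T x) * ⟪T x, ℓ⟫)) ^ 2))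
        = ∫ x : TW.E N, F₁ (T x) := by
      congr 1
      funext x
      exact hptw1 x
    have hsec : (∫ x : TW.E N, |groundStateW N (T x)| ^ (2 * (N:ℝ) / ((N:ℝ) - 2)))
        = s * TW.I₁ N := by
      have hW2 : (fun x : TW.E N => |groundStateW N (T x)| ^ (2 * (N:ℝ) / ((N:ℝ) - 2)))
          = fun x : TW.E N => TW.h N (T x) := by
        funext x
        exact TW.abs_W_rpow hN (T x)
      rw [hW2, TW.integral_comp_linear T hdet_ne (TW.h N) (TW.cont_h hN), habs, smul_eq_mul]
      rfl
    have henergy : waveEnergy N (fun x => groundStateW N (T x))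
        (fun x : TW.E N => (s⁻¹ / (N:ℝ)) * (TW.g N (T x) * ⟪T x, ℓ⟫))
        = (TW.I₁ N / (N:ℝ)) / s := by
      unfold waveEnergy
      rw [hLHS, hCoV1, hF₁int, hsec]
      have hc2 : c ^ 2 = 1 - s ^ 2 := by linarith
      rw [hc2]
      field_simp
      ring
    -- MOMENTUM computation
    have hgradval : ∀ x : TW.E N, gradient (fun x => groundStateW N (T x)) x
        = (-(1/(N:ℝ)) * TW.g N (T x)) • T (T x) := fun x => (hgradu0 x).gradient
    set F₂ : TW.E N → TW.E N :=
      fun y => (-(s⁻¹ * c)/(N:ℝ)^2) • T ((⟪e, y⟫ * TW.h N y) • y) with hF₂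
    have hF₂cont : Continuous F₂ := by
      rw [hF₂]
      have h1 := TW.cont_h hN
      have h2 := TW.cont_inner hN e
      have h3 : Continuous (T : TW.E N → TW.E N) := TW.Tmap_cont ℓ κ
      fun_prop
    have hptw2 : ∀ x : TW.E N,
        ((s⁻¹ / (N:ℝ)) * (TW.g N (T x) * ⟪T x, ℓ⟫)) •
          gradient (fun x => groundStateW N (T x)) x = F₂ (T x) := by
      intro x
      rw [hgradval x]
      show _ = (-(s⁻¹ * c) / (N:ℝ) ^ 2) • T ((⟪e, T x⟫ * TW.h N (T x)) • T x)
      rw [LinearMap.map_smul, smul_smul, smul_smul]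
      congr 1
      have h3 : ⟪T x, ℓ⟫ = c * ⟪e, T x⟫ := by
        rw [real_inner_comm]; exact hinner_e (T x)
      rw [h3, ← TW.g_sq hN (T x)]
      ring
    have hmom1 : (∫ x : TW.E N, ((s⁻¹ / (N:ℝ)) * (TW.g N (T x) * ⟪T x, ℓ⟫)) •
          gradient (fun x => groundStateW N (T x)) x)
        = ∫ x : TW.E N, F₂ (T x) := by
      congr 1
      funext x
      exact hptw2 x
    have hCoV2 : ∫ x : TW.E N, F₂ (T x) = s • ∫ y : TW.E N, F₂ y := by
      rw [TW.integral_comp_linear T hdet_ne F₂ hF₂cont, habs]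
    have hF₂val : ∫ y : TW.E N, F₂ y
        = (-(s⁻¹ * c)/(N:ℝ)^2) • (((N:ℝ) * TW.I₁ N) • T e) := by
      rw [hF₂, integral_smul]
      congr 1
      have hTc : (fun y : TW.E N => T ((⟪e, y⟫ * TW.h N y) • y))
          = fun y : TW.E N => T.toContinuousLinearMap ((⟪e, y⟫ * TW.h N y) • y) := by
        funext y
        rfl
      rw [hTc, ContinuousLinearMap.integral_comp_comm _ (TW.integrable_inner_smul_h hN e),
        TW.inner_smul_integral hN hnorme, ContinuousLinearMap.map_smul]
      simp only [LinearMap.coe_toContinuousLinearMap']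
    have hTe : T e = s⁻¹ • e := by
      rw [he, LinearMap.map_smul, hT, TW.Tmap_apply, real_inner_self_eq_norm_sq, ← hc]
      rw [show ℓ + (κ * c ^ 2) • ℓ = (1 + κ * c^2) • ℓ by module, hκc, smul_smul, smul_smul]
      rw [mul_comm]
    have hmom : waveMomentum N (fun x => groundStateW N (T x))
        (fun x : TW.E N => (s⁻¹ / (N:ℝ)) * (TW.g N (T x) * ⟪T x, ℓ⟫))
        = -((TW.I₁ N / (N:ℝ)) / s) • ℓ := by
      unfold waveMomentum
      rw [hmom1, hCoV2, hF₂val, hTe, hle]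
      rw [smul_smul, smul_smul, smul_smul, smul_smul]
      congr 1
      field_simp
    constructor
    · rw [hu0fun, hu1fun, TW.energy_W hN, henergy]
    · rw [hu0fun, hu1fun, TW.energy_W hN, hmom]
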